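/- Weak triangle inequality for Rényi divergence (finite case): for probability mass functions μ₁, μ₂, μ₃ on a finite set X with μ₁ ≪ μ₂ ≪ μ₃, and any α > 1 and p, q > 1 with 1/p + 1/q = 1, one has D^α(μ₁‖μ₃) ≤ ((pα − 1)/(p(α − 1))) · D^{pα}(μ₁‖μ₂) + D^{(q/p)(pα−1)}(μ₂‖μ₃). -/

import Mathlib

open Finset

/-- Rényi divergence of order `α` between mass functions on a finite set. -/
noncomputable def renyiD {X : Type*} [Fintype X] (α : ℝ) (μ ν : X → ℝ) : ℝ :=
  (1 / (α - 1)) * Real.log (∑ x, μ x ^ α * ν x ^ (1 - α))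

/-- Weak triangle inequality for Rényi divergence (finite case). -/
theorem renyi_weak_triangle {X : Type*} [Fintype X] (μ₁ μ₂ μ₃ : X → ℝ)
    (h₁0 : ∀ x, 0 ≤ μ₁ x) (h₂0 : ∀ x, 0 ≤ μ₂ x) (h₃0 : ∀ x, 0 ≤ μ₃ x)
    (h₁s : ∑ x, μ₁ x = 1) (h₂s : ∑ x, μ₂ x = 1) (h₃s : ∑ x, μ₃ x = 1)
    (hac₁₂ : ∀ x, μ₂ x = 0 → μ₁ x = 0) (hac₂₃ : ∀ x, μ₃ x = 0 → μ₂ x = 0)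
    (α p q : ℝ) (hα : 1 < α) (hp : 1 < p) (hq : 1 < q)
    (hpq : 1 / p + 1 / q = 1) :
    renyiD α μ₁ μ₃ ≤
      ((p * α - 1) / (p * (α - 1))) * renyiD (p * α) μ₁ μ₂ +
        renyiD ((q / p) * (p * α - 1)) μ₂ μ₃ := by
  have hp0 : (0:ℝ) < p := lt_trans one_pos hp
  have hq0 : (0:ℝ) < q := lt_trans one_pos hq
  have hα0 : (0:ℝ) < α := lt_trans one_pos hα
  have hα1 : (0:ℝ) < α - 1 := by linarith
  have hpα1 : (0:ℝ) < p * α - 1 := by nlinarith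
  set β : ℝ := (q / p) * (p * α - 1) with hβ
  have hβeq : β = q * α - q / p := by rw [hβ]; field_simp
  have hqp : q / p = q - 1 := by
    field_simp at hpq ⊢; nlinarith
  have hβ1 : β - 1 = q * (α - 1) := by rw [hβeq, hqp]; ring
  have hβ1pos : (0:ℝ) < β - 1 := by rw [hβ1]; positivity
  -- the three sums
  set S : ℝ := ∑ x, μ₁ x ^ α * μ₃ x ^ (1 - α) with hS
  set S₁ : ℝ := ∑ x, μ₁ x ^ (p * α) * μ₂ x ^ (1 - p * α) with hS₁
  set S₂ : ℝ := ∑ x, μ₂ x ^ β * μ₃ x ^ (1 - β) with hS₂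
  -- positivity of the sums
  obtain ⟨x₀, hx₀⟩ : ∃ x, 0 < μ₁ x := by
    by_contra h
    push_neg at h
    have : ∀ x ∈ (Finset.univ : Finset X), μ₁ x = 0 := fun x _ => le_antisymm (h x) (h₁0 x)
    rw [Finset.sum_eq_zero this] at h₁s; norm_num at h₁s
  have h2x₀ : 0 < μ₂ x₀ := by
    rcases lt_or_eq_of_le (h₂0 x₀) with h | h
    · exact h
    · exact absurd (hac₁₂ x₀ h.symm) (ne_of_gt hx₀)
  have h3x₀ : 0 < μ₃ x₀ := by
    rcases lt_or_eq_of_le (h₃0 x₀) with h | h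
    · exact h
    · exact absurd (hac₂₃ x₀ h.symm) (ne_of_gt h2x₀)
  have hterm_nonneg : ∀ (a b : ℝ) (c d : X → ℝ), (∀ x, 0 ≤ c x) → (∀ x, 0 ≤ d x) →
      ∀ x ∈ (Finset.univ : Finset X), 0 ≤ c x ^ a * d x ^ b := by
    intro a b c d hc hd x _
    exact mul_nonneg (Real.rpow_nonneg (hc x) a) (Real.rpow_nonneg (hd x) b)
  have hSpos : 0 < S := by
    apply Finset.sum_pos' (hterm_nonneg _ _ _ _ h₁0 h₃0) ⟨x₀, Finset.mem_univ x₀,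
      mul_pos (Real.rpow_pos_of_pos hx₀ _) (Real.rpow_pos_of_pos h3x₀ _)⟩
  have hS₁pos : 0 < S₁ := by
    apply Finset.sum_pos' (hterm_nonneg _ _ _ _ h₁0 h₂0) ⟨x₀, Finset.mem_univ x₀,
      mul_pos (Real.rpow_pos_of_pos hx₀ _) (Real.rpow_pos_of_pos h2x₀ _)⟩
  have hS₂pos : 0 < S₂ := by
    apply Finset.sum_pos' (hterm_nonneg _ _ _ _ h₂0 h₃0) ⟨x₀, Finset.mem_univ x₀,
      mul_pos (Real.rpow_pos_of_pos h2x₀ _) (Real.rpow_pos_of_pos h3x₀ _)⟩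
  -- Hölder
  set f : X → ℝ := fun x => μ₁ x ^ α * μ₂ x ^ (1 / p - α) with hf
  set g : X → ℝ := fun x => μ₂ x ^ (α - 1 / p) * μ₃ x ^ (1 - α) with hg
  have hfg : ∀ x, f x * g x = μ₁ x ^ α * μ₃ x ^ (1 - α) := by
    intro x
    rcases lt_or_eq_of_le (h₂0 x) with h2 | h2
    · simp only [hf, hg]
      rw [mul_assoc, ← mul_assoc (μ₂ x ^ (1 / p - α)), ← Real.rpow_add h2]
      norm_num
    · have h1 : μ₁ x = 0 := hac₁₂ x h2.symm
      simp [hf, hg, h1, Real.zero_rpow (ne_of_gt hα0)]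
  have hfp : ∀ x, f x ^ p = μ₁ x ^ (p * α) * μ₂ x ^ (1 - p * α) := by
    intro x
    rw [hf, Real.mul_rpow (Real.rpow_nonneg (h₁0 x) _) (Real.rpow_nonneg (h₂0 x) _),
      ← Real.rpow_mul (h₁0 x), ← Real.rpow_mul (h₂0 x),
      show α * p = p * α from mul_comm _ _,
      show (1 / p - α) * p = 1 - p * α from by field_simp]
  have hgq : ∀ x, g x ^ q = μ₂ x ^ β * μ₃ x ^ (1 - β) := by
    intro x
    rw [hg, Real.mul_rpow (Real.rpow_nonneg (h₂0 x) _) (Real.rpow_nonneg (h₃0 x) _),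
      ← Real.rpow_mul (h₂0 x), ← Real.rpow_mul (h₃0 x),
      show (α - 1 / p) * q = β from by rw [hβeq]; field_simp,
      show (1 - α) * q = 1 - β from by nlinarith [hβ1]]
  have hconj : p.HolderConjugate q := Real.holderConjugate_iff.mpr ⟨hp, by rw [← one_div, ← one_div]; exact hpq⟩
  have hholder : S ≤ S₁ ^ (1 / p) * S₂ ^ (1 / q) := by
    have h := Real.inner_le_Lp_mul_Lq_of_nonneg (Finset.univ : Finset X) hconj
      (f := f) (g := g)
      (fun x _ => mul_nonneg (Real.rpow_nonneg (h₁0 x) _) (Real.rpow_nonneg (h₂0 x) _))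
      (fun x _ => mul_nonneg (Real.rpow_nonneg (h₂0 x) _) (Real.rpow_nonneg (h₃0 x) _))
    calc S = ∑ x, f x * g x := by rw [hS]; exact (Finset.sum_congr rfl fun x _ => (hfg x).symm)
    _ ≤ (∑ x, f x ^ p) ^ (1/p) * (∑ x, g x ^ q) ^ (1/q) := h
    _ = S₁ ^ (1 / p) * S₂ ^ (1 / q) := by
        rw [show (∑ x, f x ^ p) = S₁ from by
            rw [hS₁]; exact Finset.sum_congr rfl fun x _ => hfp x,
          show (∑ x, g x ^ q) = S₂ from by
            rw [hS₂]; exact Finset.sum_congr rfl fun x _ => hgq x]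
  -- take logs
  have hlog : Real.log S ≤ (1 / p) * Real.log S₁ + (1 / q) * Real.log S₂ := by
    calc Real.log S ≤ Real.log (S₁ ^ (1 / p) * S₂ ^ (1 / q)) :=
          Real.log_le_log hSpos hholder
    _ = (1 / p) * Real.log S₁ + (1 / q) * Real.log S₂ := by
        rw [Real.log_mul (ne_of_gt (Real.rpow_pos_of_pos hS₁pos _))
          (ne_of_gt (Real.rpow_pos_of_pos hS₂pos _)),
          Real.log_rpow hS₁pos, Real.log_rpow hS₂pos]
  -- final algebra
  have key : (1 / (α - 1)) * Real.log S ≤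
      (1 / (α - 1)) * ((1 / p) * Real.log S₁ + (1 / q) * Real.log S₂) :=
    mul_le_mul_of_nonneg_left hlog (by positivity)
  have hrw : ((p * α - 1) / (p * (α - 1))) * ((1 / (p * α - 1)) * Real.log S₁) +
      (1 / (β - 1)) * Real.log S₂
      = (1 / (α - 1)) * ((1 / p) * Real.log S₁ + (1 / q) * Real.log S₂) := by
    rw [hβ1]
    field_simp
  simp only [renyiD, ← hS, ← hS₁, ← hS₂, ← hβ]
  rw [hrw] at *
  linarith [key]
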